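/- Let μ > 0, σ > 0, γ > 0 with 0 < μ/(γσ²) and μ/(γσ²) ≠ 1, write π* = μ/(γσ²), and let ε₀ > 0 and λ : (0, ε₀) → (0, μ) be a function satisfying λ(ε) = γσ²·( (3/(4γ))·π*²·(1−π*)² )^{1/3}·ε^{1/3} + O(ε) as ε ↓ 0. Then the liquidity premium LiPr(ε) = μ − √(μ² − λ(ε)²) satisfies the asymptotic expansion LiPr(ε) = (μ/(2π*²))·( (3/(4γ))·π*²·(1−π*)² )^{2/3}·ε^{2/3} + O(ε^{4/3}) as ε ↓ 0. -/

import Mathlib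

open Asymptotics

set_option maxHeartbeats 1000000 in
/-- Asymptotics of the liquidity premium:
`LiPr(ε) = (μ/(2π*²))·((3/(4γ))·π*²·(1-π*)²)^{2/3}·ε^{2/3} + O(ε^{4/3})`
as `ε ↓ 0`. -/
theorem liquidity_premium_asymptotics
    (μ σ γ : ℝ) (hμ : 0 < μ) (hσ : 0 < σ) (hγ : 0 < γ)
    (hmerton : 0 < μ / (γ * σ ^ 2)) (hmerton1 : μ / (γ * σ ^ 2) ≠ 1)
    (πs : ℝ) (hπs : πs = μ / (γ * σ ^ 2))
    (ε₀ : ℝ) (hε₀ : 0 < ε₀) (lam : ℝ → ℝ)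
    (hmem : ∀ ε ∈ Set.Ioo (0 : ℝ) ε₀, lam ε ∈ Set.Ioo 0 μ)
    (hlam : (fun ε : ℝ => lam ε
        - γ * σ ^ 2 * ((3 / (4 * γ)) * πs ^ 2 * (1 - πs) ^ 2) ^ ((1 : ℝ) / 3)
          * ε ^ ((1 : ℝ) / 3))
      =O[nhdsWithin 0 (Set.Ioi 0)] fun ε : ℝ => ε)
    (LiPr : ℝ → ℝ)
    (hLiPr : LiPr = fun ε : ℝ => μ - Real.sqrt (μ ^ 2 - lam ε ^ 2)) :
    (fun ε : ℝ => LiPr ε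
        - (μ / (2 * πs ^ 2)) * ((3 / (4 * γ)) * πs ^ 2 * (1 - πs) ^ 2) ^ ((2 : ℝ) / 3)
          * ε ^ ((2 : ℝ) / 3))
      =O[nhdsWithin 0 (Set.Ioi 0)] fun ε : ℝ => ε ^ ((4 : ℝ) / 3) := by
  set l := nhdsWithin (0:ℝ) (Set.Ioi 0) with hl
  set K : ℝ := (3 / (4 * γ)) * πs ^ 2 * (1 - πs) ^ 2 with hKdef
  have hπpos : 0 < πs := hπs ▸ hmerton
  have hπne1 : πs ≠ 1 := hπs ▸ hmerton1
  have hK : 0 < K := by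
    have hne : 1 - πs ≠ 0 := sub_ne_zero.mpr (Ne.symm hπne1)
    have h1 : 0 < (1 - πs) ^ 2 := by positivity
    have h2 : 0 < 3 / (4 * γ) * πs ^ 2 := by positivity
    exact mul_pos h2 h1
  set c : ℝ := γ * σ ^ 2 * K ^ ((1:ℝ)/3) with hcdef
  have hc : 0 < c := by positivity
  clear_value c
  clear_value K
  -- membership eventually
  have hIoo : Set.Ioo (0:ℝ) (min ε₀ 1) ∈ l :=
    Ioo_mem_nhdsGT (lt_min hε₀ one_pos)
  have hpos : ∀ᶠ ε in l, 0 < ε := by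
    filter_upwards [self_mem_nhdsWithin] with ε hε using hε
  -- ε = O(ε^{1/3})
  have h13 : (fun ε : ℝ => ε) =O[l] fun ε : ℝ => ε ^ ((1:ℝ)/3) := by
    apply IsBigO.of_bound 1
    filter_upwards [hIoo] with ε hε
    have h0 : 0 < ε := hε.1
    have h1 : ε ≤ 1 := le_of_lt (lt_of_lt_of_le hε.2 (min_le_right _ _))
    have : ε ^ (1:ℝ) ≤ ε ^ ((1:ℝ)/3) :=
      Real.rpow_le_rpow_of_exponent_ge h0 h1 (by norm_num)
    rw [Real.rpow_one] at this
    simp only [Real.norm_eq_abs]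
    rw [abs_of_pos h0, abs_of_pos (Real.rpow_pos_of_pos h0 _), one_mul]
    exact this
  have hlam13 : (fun ε : ℝ => lam ε) =O[l] fun ε : ℝ => ε ^ ((1:ℝ)/3) := by
    have heq : (fun ε : ℝ => lam ε)
        = fun ε : ℝ => (lam ε - c * ε ^ ((1:ℝ)/3)) + c * ε ^ ((1:ℝ)/3) := by
      funext ε; ring
    rw [heq]
    exact (hlam.trans h13).add ((isBigO_refl (fun ε : ℝ => ε ^ ((1:ℝ)/3)) l).const_mul_left c)
  have hsum : (fun ε : ℝ => lam ε + c * ε ^ ((1:ℝ)/3)) =O[l] fun ε : ℝ => ε ^ ((1:ℝ)/3) :=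
    hlam13.add ((isBigO_refl (fun ε : ℝ => ε ^ ((1:ℝ)/3)) l).const_mul_left c)
  -- B term
  have hB : (fun ε : ℝ => (lam ε - c * ε ^ ((1:ℝ)/3)) * (lam ε + c * ε ^ ((1:ℝ)/3)))
      =O[l] fun ε : ℝ => ε ^ ((4:ℝ)/3) := by
    have := hlam.mul hsum
    refine this.congr' Filter.EventuallyEq.rfl ?_
    filter_upwards [hpos] with ε hε
    rw [show (4:ℝ)/3 = 1 + 1/3 by norm_num, Real.rpow_add hε, Real.rpow_one]
  -- A term
  have hIoo2 : Set.Ioo (0:ℝ) ε₀ ∈ l := Ioo_mem_nhdsGT hε₀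
  have hA : (fun ε : ℝ => LiPr ε - lam ε ^ 2 / (2 * μ)) =O[l] fun ε : ℝ => lam ε ^ 4 := by
    apply IsBigO.of_bound (1 / (2 * μ ^ 3))
    filter_upwards [hIoo2] with ε hε
    obtain ⟨hl0, hlμ⟩ := hmem ε hε
    set s : ℝ := Real.sqrt (μ ^ 2 - lam ε ^ 2) with hsdef
    clear_value s
    have hlam2 : lam ε ^ 2 ≤ μ ^ 2 := by nlinarith
    have hs0 : 0 ≤ s := hsdef ▸ Real.sqrt_nonneg _
    have hs2 : s ^ 2 = μ ^ 2 - lam ε ^ 2 := by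
      rw [hsdef]; exact Real.sq_sqrt (by linarith)
    have hsμ : s ≤ μ := by nlinarith
    have hLi : LiPr ε = μ - s := by simp only [hLiPr, hsdef]
    have key : LiPr ε - lam ε ^ 2 / (2 * μ) = (μ - s) ^ 2 / (2 * μ) := by
      rw [hLi]
      field_simp
      nlinarith [hs2]
    have h2 : 0 ≤ μ - s := by linarith
    have hμs : (μ - s) * μ ≤ lam ε ^ 2 := by nlinarith
    have h3 : 0 ≤ (μ - s) * μ := mul_nonneg h2 hμ.le
    have h4 := mul_le_mul hμs hμs h3 (sq_nonneg (lam ε))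
    have h1 : (μ - s) ^ 2 * μ ^ 2 ≤ lam ε ^ 4 := by
      calc (μ - s) ^ 2 * μ ^ 2 = ((μ - s) * μ) * ((μ - s) * μ) := by ring
        _ ≤ lam ε ^ 2 * lam ε ^ 2 := h4
        _ = lam ε ^ 4 := by ring
    have h1' : (μ - s) ^ 2 ≤ lam ε ^ 4 / μ ^ 2 := (le_div_iff₀ (by positivity)).mpr h1
    have hfin : (μ - s) ^ 2 / (2 * μ) ≤ 1 / (2 * μ ^ 3) * lam ε ^ 4 := by
      calc (μ - s) ^ 2 / (2 * μ) ≤ (lam ε ^ 4 / μ ^ 2) / (2 * μ) := by gcongr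
        _ = 1 / (2 * μ ^ 3) * lam ε ^ 4 := by field_simp
    simp only [Real.norm_eq_abs]
    rw [key, abs_of_nonneg (by positivity), abs_of_nonneg (by positivity)]
    exact hfin
  have h134 : (fun ε : ℝ => (ε ^ ((1:ℝ)/3)) ^ 4) =O[l] fun ε : ℝ => ε ^ ((4:ℝ)/3) := by
    apply IsBigO.of_bound 1
    filter_upwards [hpos] with ε hε
    rw [← Real.rpow_natCast (ε ^ ((1:ℝ)/3)) 4, ← Real.rpow_mul hε.le]
    norm_num
  have hAO : (fun ε : ℝ => LiPr ε - lam ε ^ 2 / (2 * μ)) =O[l] fun ε : ℝ => ε ^ ((4:ℝ)/3) :=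
    hA.trans ((hlam13.pow 4).trans h134)
  -- combine
  have hsum2 : (fun ε : ℝ => (LiPr ε - lam ε ^ 2 / (2 * μ))
      + (1 / (2 * μ)) * ((lam ε - c * ε ^ ((1:ℝ)/3)) * (lam ε + c * ε ^ ((1:ℝ)/3))))
      =O[l] fun ε : ℝ => ε ^ ((4:ℝ)/3) := hAO.add (hB.const_mul_left _)
  refine hsum2.congr' ?_ Filter.EventuallyEq.rfl
  -- target eventually equals the sum
  have hcoef : μ / (2 * πs ^ 2) * K ^ ((2:ℝ)/3) = c ^ 2 / (2 * μ) := by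
    have hKpow : (K ^ ((1:ℝ)/3)) ^ 2 = K ^ ((2:ℝ)/3) := by
      rw [← Real.rpow_natCast (K ^ ((1:ℝ)/3)) 2, ← Real.rpow_mul hK.le]
      norm_num
    rw [hcdef, mul_pow, mul_pow, hKpow, hπs]
    field_simp
  filter_upwards [hpos] with ε hε
  have hεpow : (ε ^ ((1:ℝ)/3)) ^ 2 = ε ^ ((2:ℝ)/3) := by
    rw [← Real.rpow_natCast (ε ^ ((1:ℝ)/3)) 2, ← Real.rpow_mul hε.le]
    norm_num
  have hμne : (2:ℝ) * μ ≠ 0 := by positivity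
  have heq : (LiPr ε - lam ε ^ 2 / (2 * μ))
      + (1 / (2 * μ)) * ((lam ε - c * ε ^ ((1:ℝ)/3)) * (lam ε + c * ε ^ ((1:ℝ)/3)))
      = LiPr ε - (c ^ 2 / (2 * μ)) * ε ^ ((2:ℝ)/3) := by
    rw [← hεpow]
    field_simp
    ring
  rw [hcoef]
  exact heq
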